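/- An invertible matrix A with polar decomposition A = VQ (V unitary, Q positive definite) is normal if and only if A = Q^{1/2} V Q^{1/2}. -/

import Mathlib

open Matrix
open scoped ComplexOrder

/-- The old Mathlib `Matrix.PosSemidef.sqrt` (removed), spelled out with its old definition. -/
noncomputable def Matrix.PosSemidef.oldSqrt {n : Type*} [Fintype n] [DecidableEq n]
    {A : Matrix n n ℂ} (hA : A.PosSemidef) : Matrix n n ℂ :=
  hA.1.eigenvectorUnitary.1 * diagonal ((↑) ∘ (Real.sqrt ·) ∘ hA.1.eigenvalues) *
    (star hA.1.eigenvectorUnitary : Matrix n n ℂ)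

lemma oldSqrt_posSemidef {n : Type*} [Fintype n] [DecidableEq n]
    {A : Matrix n n ℂ} (hA : A.PosSemidef) : hA.oldSqrt.PosSemidef := by
  unfold Matrix.PosSemidef.oldSqrt
  have hD : (diagonal ((↑) ∘ (Real.sqrt ·) ∘ hA.1.eigenvalues : n → ℂ)).PosSemidef := by
    refine PosSemidef.diagonal ?_
    intro i
    simp only [Function.comp_apply]
    exact Complex.zero_le_real.mpr (Real.sqrt_nonneg _)
  have := hD.mul_mul_conjTranspose_same (hA.1.eigenvectorUnitary.1)
  simpa [star_eq_conjTranspose] using this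

lemma oldSqrt_mul_self {n : Type*} [Fintype n] [DecidableEq n]
    {A : Matrix n n ℂ} (hA : A.PosSemidef) : hA.oldSqrt * hA.oldSqrt = A := by
  unfold Matrix.PosSemidef.oldSqrt
  conv_rhs => rw [hA.1.spectral_theorem, Unitary.conjStarAlgAut_apply]
  have hu : (star hA.1.eigenvectorUnitary : Matrix n n ℂ) * hA.1.eigenvectorUnitary.1 = 1 :=
    Unitary.coe_star_mul_self _
  have hd : diagonal ((↑) ∘ (Real.sqrt ·) ∘ hA.1.eigenvalues : n → ℂ) *
      diagonal ((↑) ∘ (Real.sqrt ·) ∘ hA.1.eigenvalues : n → ℂ) =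
      diagonal (RCLike.ofReal ∘ hA.1.eigenvalues) := by
    rw [diagonal_mul_diagonal]
    congr 1; funext i
    simp only [Function.comp_apply]
    rw [← Complex.ofReal_mul, Real.mul_self_sqrt (hA.eigenvalues_nonneg i)]
    rfl
  calc _ = hA.1.eigenvectorUnitary.1 * diagonal ((↑) ∘ (Real.sqrt ·) ∘ hA.1.eigenvalues) *
      ((star hA.1.eigenvectorUnitary : Matrix n n ℂ) * hA.1.eigenvectorUnitary.1) *
      diagonal ((↑) ∘ (Real.sqrt ·) ∘ hA.1.eigenvalues) *
      (star hA.1.eigenvectorUnitary : Matrix n n ℂ) := by simp only [Matrix.mul_assoc]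
    _ = _ := by rw [hu, Matrix.mul_one, Matrix.mul_assoc _ (diagonal _) (diagonal _), hd]

open scoped MatrixOrder in
lemma eq_sq {m : Type*} [Fintype m] [DecidableEq m] {B P : Matrix m m ℂ}
    (hB : B.PosSemidef) (hP : P.PosSemidef) (h : B ^ 2 = P ^ 2) : B = P := by
  rw [pow_two, pow_two] at h
  have h1 := CFC.sqrt_unique (a := P * P) (b := B) h (nonneg_iff_posSemidef.mpr hB)
  have h2 := CFC.sqrt_unique (a := P * P) (b := P) rfl (nonneg_iff_posSemidef.mpr hP)
  rw [← h1, h2]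

/-- If a unitary `V` commutes with `P * P` for `P` positive semidefinite, then it
commutes with `P`. -/
lemma comm_of_comm_sq {m : Type*} [Fintype m] [DecidableEq m]
    {V P : Matrix m m ℂ} (hV : Vᴴ * V = 1) (hP : P.PosSemidef)
    (h : V * (P * P) = (P * P) * V) : V * P = P * V := by
  have hV' : V * Vᴴ = 1 := mul_eq_one_comm.mp hV
  have hB : (Vᴴ * P * V).PosSemidef := hP.conjTranspose_mul_mul_same V
  have hsq : (Vᴴ * P * V) ^ 2 = P ^ 2 := by
    have : Vᴴ * P * V * (Vᴴ * P * V) = Vᴴ * P * (V * Vᴴ) * P * V := by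
      simp only [Matrix.mul_assoc]
    rw [pow_two, pow_two, this, hV', Matrix.mul_one]
    calc Vᴴ * P * P * V = Vᴴ * (P * P * V) := by simp only [Matrix.mul_assoc]
      _ = Vᴴ * (V * (P * P)) := by rw [h]
      _ = (Vᴴ * V) * (P * P) := by simp only [Matrix.mul_assoc]
      _ = P * P := by rw [hV, Matrix.one_mul]
  have heq : Vᴴ * P * V = P := eq_sq hB hP hsq
  have := congrArg (fun M => V * M) heq
  simp only [← Matrix.mul_assoc, hV', Matrix.one_mul] at this
  exact this.symm

/-- An invertible matrix `A` with polar decomposition `A = VQ` (`V` unitary, `Q`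
positive definite) is normal if and only if `A = Q^{1/2} V Q^{1/2}`. -/
theorem normal_iff_symmetric_polar {n : ℕ} (A V Q : Matrix (Fin n) (Fin n) ℂ)
    (hA : IsUnit A) (hV : Vᴴ * V = 1) (hQ : Q.PosDef) (hVQ : A = V * Q) :
    A * Aᴴ = Aᴴ * A ↔ A = hQ.posSemidef.oldSqrt * V * hQ.posSemidef.oldSqrt := by
  set S := hQ.posSemidef.oldSqrt with hSdef
  have hS : S.PosSemidef := oldSqrt_posSemidef hQ.posSemidef
  have hSS : S * S = Q := oldSqrt_mul_self hQ.posSemidef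
  have hV' : V * Vᴴ = 1 := mul_eq_one_comm.mp hV
  have hQH : Qᴴ = Q := hQ.isHermitian.eq
  have hAH : Aᴴ = Q * Vᴴ := by rw [hVQ, conjTranspose_mul, hQH]
  have hAAH : A * Aᴴ = V * (Q * Q) * Vᴴ := by
    rw [hAH, hVQ]; simp only [Matrix.mul_assoc]
  have hAHA : Aᴴ * A = Q * Q := by
    rw [hAH, hVQ]
    calc Q * Vᴴ * (V * Q) = Q * (Vᴴ * V) * Q := by simp only [Matrix.mul_assoc]
      _ = Q * Q := by rw [hV, Matrix.mul_one]
  constructor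
  · intro h
    have h1 : V * (Q * Q) * Vᴴ = Q * Q := by rw [← hAAH, ← hAHA, h]
    have h2 : V * (Q * Q) = Q * Q * V := by
      have := congrArg (fun M => M * V) h1
      simpa only [Matrix.mul_assoc, hV, Matrix.mul_one] using this
    have hc : V * Q = Q * V := comm_of_comm_sq hV hQ.posSemidef h2
    have h3 : V * (S * S) = S * S * V := by rw [hSS]; exact hc
    have hcs : V * S = S * V := comm_of_comm_sq hV hS h3
    rw [hVQ, ← hSS, ← Matrix.mul_assoc, hcs]
  · intro h
    have hdetS : IsUnit S.det := by
      have h1 : S.det * S.det = Q.det := by rw [← det_mul, hSS]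
      have h2 : IsUnit Q.det := (isUnit_iff_isUnit_det Q).mp hQ.isUnit
      rw [← h1] at h2
      exact isUnit_of_mul_isUnit_left h2
    have hSu : IsUnit S := (isUnit_iff_isUnit_det S).mpr hdetS
    have heq : V * S * S = S * V * S := by
      calc V * S * S = V * Q := by rw [Matrix.mul_assoc, hSS]
        _ = S * V * S := by rw [← hVQ, h]
    have hcs : V * S = S * V := by
      have := congrArg (fun M => M * S⁻¹) heq
      simpa only [Matrix.mul_assoc, Matrix.mul_nonsing_inv S hdetS,
        Matrix.mul_one] using this
    have hc : V * Q = Q * V := by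
      rw [← hSS]
      calc V * (S * S) = (S * V) * S := by rw [← Matrix.mul_assoc, hcs]
        _ = S * (V * S) := by rw [Matrix.mul_assoc]
        _ = S * S * V := by rw [hcs, Matrix.mul_assoc]
    rw [hAAH, hAHA]
    calc V * (Q * Q) * Vᴴ = V * Q * (Q * Vᴴ) := by simp only [Matrix.mul_assoc]
      _ = Q * V * (Q * Vᴴ) := by rw [hc]
      _ = Q * (V * Q) * Vᴴ := by simp only [Matrix.mul_assoc]
      _ = Q * (Q * V) * Vᴴ := by rw [hc]
      _ = Q * Q * (V * Vᴴ) := by simp only [Matrix.mul_assoc]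
      _ = Q * Q := by rw [hV', Matrix.mul_one]
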